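/- For real numbers h_m > h_e > 0 and P ≥ 0, the secrecy rate R_s(P) = log(1 + P·h_m) − log(1 + P·h_e) is a strictly concave function of P on [0, ∞). -/

import Mathlib

/-- For `h_m > h_e > 0`, the secrecy rate `P ↦ log(1+P·h_m) − log(1+P·h_e)` is
strictly concave on `[0,∞)`. -/
theorem secrecy_rate_strictConcave (hm he : ℝ) (hhe : 0 < he) (hlt : he < hm) :
    StrictConcaveOn ℝ (Set.Ici (0 : ℝ))
      (fun P : ℝ => Real.log (1 + P * hm) - Real.log (1 + P * he)) := by
  have hm0 : 0 < hm := hhe.trans hlt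
  set f := fun P : ℝ => Real.log (1 + P * hm) - Real.log (1 + P * he) with hfdef
  set g := fun x : ℝ => hm / (1 + x * hm) - he / (1 + x * he) with hgdef
  have hd : ∀ x : ℝ, 0 ≤ x → HasDerivAt f (g x) x := by
    intro x hx
    have h1 : 0 < 1 + x * hm := by nlinarith
    have h2 : 0 < 1 + x * he := by nlinarith
    have d1 : HasDerivAt (fun P : ℝ => 1 + P * hm) hm x := by
      simpa using ((hasDerivAt_id x).mul_const hm).const_add 1
    have d2 : HasDerivAt (fun P : ℝ => 1 + P * he) he x := by
      simpa using ((hasDerivAt_id x).mul_const he).const_add 1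
    have l1 := (Real.hasDerivAt_log h1.ne').comp x d1
    have l2 := (Real.hasDerivAt_log h2.ne').comp x d2
    have := l1.sub l2
    convert this using 1
    all_goals first | rfl | simp [hgdef, div_eq_inv_mul]
  apply strictConcaveOn_of_deriv2_neg (convex_Ici 0)
  · intro x hx
    exact ((hd x hx).differentiableAt.continuousAt).continuousWithinAt
  · intro x hx
    rw [interior_Ici] at hx
    have hx0 : 0 < x := hx
    have h1 : 0 < 1 + x * hm := by nlinarith
    have h2 : 0 < 1 + x * he := by nlinarith
    have heq : deriv f =ᶠ[nhds x] g := by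
      filter_upwards [Ioi_mem_nhds hx0] with y hy
      exact (hd y (le_of_lt hy)).deriv
    have hderiv2 : deriv (deriv f) x = deriv g x := heq.deriv_eq
    have dg : HasDerivAt g
        ((0 * (1 + x * hm) - hm * hm) / (1 + x * hm) ^ 2 -
         (0 * (1 + x * he) - he * he) / (1 + x * he) ^ 2) x := by
      have d1 : HasDerivAt (fun P : ℝ => 1 + P * hm) hm x := by
        simpa using ((hasDerivAt_id x).mul_const hm).const_add 1
      have d2 : HasDerivAt (fun P : ℝ => 1 + P * he) he x := by
        simpa using ((hasDerivAt_id x).mul_const he).const_add 1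
      exact ((hasDerivAt_const x hm).div d1 h1.ne').sub
        ((hasDerivAt_const x he).div d2 h2.ne')
    rw [show deriv^[2] f x = deriv (deriv f) x from rfl, hderiv2, dg.deriv]
    have key : he / (1 + x * he) < hm / (1 + x * hm) := by
      rw [div_lt_div_iff₀ h2 h1]; nlinarith
    have hb : 0 < he / (1 + x * he) := div_pos hhe h2
    have hsq : (he / (1 + x * he)) ^ 2 < (hm / (1 + x * hm)) ^ 2 := by
      exact pow_lt_pow_left₀ key hb.le two_ne_zero
    rw [div_pow, div_pow] at hsq
    have e1 : (0 * (1 + x * hm) - hm * hm) / (1 + x * hm) ^ 2 = -(hm ^ 2 / (1 + x * hm) ^ 2) := by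
      ring
    have e2 : (0 * (1 + x * he) - he * he) / (1 + x * he) ^ 2 = -(he ^ 2 / (1 + x * he) ^ 2) := by
      ring
    rw [e1, e2]
    linarith
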